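/- If (y₁, y₂) is a pair of twice continuously differentiable functions on [0,1] satisfying the coupled Euler–Lagrange system y₁'' + 2a y₂' + b y₁ = 0 and y₂'' + 2a y₁' + b y₂ = 0 with y₁(0) = y₂(0) = α and y₁(1) = y₂(1) = β, and if b - a² ≠ m²π² for all integers m, then y₁ = y₂ and the common function y = y₁ = y₂ satisfies y'' + 2a y' + b y = 0 with y(0)=α, y(1)=β. -/

import Mathlib

/-- Extract differentiability of a `C²` function and of its derivative. -/
lemma cel_deriv_facts {f : ℝ → ℝ} (hf : ContDiff ℝ 2 f) :
    Differentiable ℝ f ∧ Differentiable ℝ (deriv f) := by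
  have hf2 : ContDiff ℝ ((1:ℕ) + 1) f := by exact_mod_cast hf
  obtain ⟨hd1, -, hcd1⟩ := contDiff_succ_iff_deriv.mp hf2
  exact ⟨hd1, hcd1.differentiable (by simp)⟩

/-- Uniqueness for the IVP `v'' = -λ v`, `v 0 = 0`, `v' 0 = 0` on `[0,1]`,
via a Gronwall-type energy argument. -/
lemma cel_ivp_unique (lam : ℝ) (v : ℝ → ℝ) (hv : ContDiff ℝ 2 v)
    (hode : ∀ x ∈ Set.Icc (0:ℝ) 1, deriv (deriv v) x = -lam * v x)
    (h0 : v 0 = 0) (h0' : deriv v 0 = 0) :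
    ∀ x ∈ Set.Icc (0:ℝ) 1, v x = 0 := by
  obtain ⟨hd1, hd2⟩ := cel_deriv_facts hv
  set K : ℝ := |lam| + 1 with hK
  have hK1 : (1:ℝ) ≤ K := by have := abs_nonneg lam; linarith
  set C : ℝ := K - lam with hC
  have hC1 : (1:ℝ) ≤ C := by have := le_abs_self lam; simp only [hC, hK]; linarith
  set F : ℝ → ℝ := fun x => (deriv v x) ^ 2 + K * (v x) ^ 2 with hF
  have hFd : ∀ x, HasDerivAt F
      (2 * deriv v x * deriv (deriv v) x + K * (2 * v x * deriv v x)) x := by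
    intro x
    have h1 : HasDerivAt (fun x => (deriv v x) ^ 2)
        (2 * deriv v x ^ 1 * deriv (deriv v) x) x := ((hd2 x).hasDerivAt).pow 2
    have h2 : HasDerivAt (fun x => K * (v x) ^ 2)
        (K * (2 * v x ^ 1 * deriv v x)) x := (((hd1 x).hasDerivAt).pow 2).const_mul K
    exact (h1.add h2).congr_deriv (by ring)
  set G : ℝ → ℝ := fun x => Real.exp (-C * x) * F x with hG
  have hGd : ∀ x, HasDerivAt G
      (-C * Real.exp (-C * x) * F x +
        Real.exp (-C * x) * (2 * deriv v x * deriv (deriv v) x + K * (2 * v x * deriv v x))) x := by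
    intro x
    have hlin : HasDerivAt (fun y : ℝ => -C * y) (-C) x := by
      simpa using (hasDerivAt_id x).const_mul (-C)
    have he : HasDerivAt (fun x => Real.exp (-C * x)) (Real.exp (-C * x) * (-C)) x :=
      (Real.hasDerivAt_exp (-C * x)).comp x hlin
    have := he.mul (hFd x)
    exact this.congr_deriv (by ring)
  have hGanti : AntitoneOn G (Set.Icc 0 1) := by
    apply antitoneOn_of_deriv_nonpos (convex_Icc 0 1)
    · exact fun x _ => ((hGd x).continuousAt).continuousWithinAt
    · exact fun x _ => ((hGd x).differentiableAt).differentiableWithinAt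
    · intro x hx
      rw [interior_Icc] at hx
      rw [(hGd x).deriv]
      have hxI : x ∈ Set.Icc (0:ℝ) 1 := Set.mem_Icc_of_Ioo hx
      rw [hode x hxI]
      have hep : (0:ℝ) < Real.exp (-C * x) := Real.exp_pos _
      have key : 2 * deriv v x * (-lam * v x) + K * (2 * v x * deriv v x)
          - C * F x ≤ 0 := by
        have h2 : 2 * v x * deriv v x ≤ (v x) ^ 2 + (deriv v x) ^ 2 := by
          nlinarith [sq_nonneg (v x - deriv v x)]
        have hFlb : (v x) ^ 2 + (deriv v x) ^ 2 ≤ F x := by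
          simp only [hF]
          nlinarith [sq_nonneg (v x)]
        have hFnn : 0 ≤ F x := by positivity
        have : 2 * deriv v x * (-lam * v x) + K * (2 * v x * deriv v x)
            = C * (2 * v x * deriv v x) := by rw [hC]; ring
        rw [this]
        nlinarith [mul_le_mul_of_nonneg_left h2 (by linarith : (0:ℝ) ≤ C),
          mul_le_mul_of_nonneg_left hFlb (by linarith : (0:ℝ) ≤ C)]
      nlinarith [key, hep]
  intro x hx
  have hGx : G x ≤ G 0 := hGanti (Set.left_mem_Icc.mpr zero_le_one) hx hx.1
  have hG0 : G 0 = 0 := by simp [hG, hF, h0, h0']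
  have hGnn : 0 ≤ G x := by
    have h1 : 0 ≤ F x := by positivity
    have h2 := (Real.exp_pos (-C * x)).le
    simp only [hG]; positivity
  have hFx : F x = 0 := by
    have : G x = 0 := le_antisymm (hG0 ▸ hGx) hGnn
    have hep : (0:ℝ) < Real.exp (-C * x) := Real.exp_pos _
    simp only [hG] at this
    exact (mul_eq_zero.mp this).resolve_left (ne_of_gt hep)
  simp only [hF] at hFx
  nlinarith [sq_nonneg (deriv v x), sq_nonneg (v x)]

/-- BVP uniqueness given a comparison solution `s` with `s 0 = 0`, `s' 0 = 1`,
`s 1 ≠ 0`. -/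
lemma cel_bvp_zero (lam : ℝ) (w s : ℝ → ℝ) (hw : ContDiff ℝ 2 w) (hs : ContDiff ℝ 2 s)
    (hwode : ∀ x ∈ Set.Icc (0:ℝ) 1, deriv (deriv w) x = -lam * w x)
    (hsode : ∀ x, deriv (deriv s) x = -lam * s x)
    (hw0 : w 0 = 0) (hw1 : w 1 = 0) (hs0 : s 0 = 0) (hs0' : deriv s 0 = 1)
    (hs1 : s 1 ≠ 0) :
    ∀ x ∈ Set.Icc (0:ℝ) 1, w x = 0 := by
  obtain ⟨hw1d, hw2d⟩ := cel_deriv_facts hw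
  obtain ⟨hs1d, hs2d⟩ := cel_deriv_facts hs
  set c : ℝ := deriv w 0 with hc
  set v : ℝ → ℝ := fun x => w x - c * s x with hv
  have hvc : ContDiff ℝ 2 v := hw.sub (contDiff_const.mul hs)
  have hdv : deriv v = fun x => deriv w x - c * deriv s x := by
    funext x
    rw [hv]
    rw [deriv_fun_sub (hw1d x) ((hs1d x).const_mul c), deriv_const_mul c (hs1d x)]
  have hddv : ∀ x, deriv (deriv v) x = deriv (deriv w) x - c * deriv (deriv s) x := by
    intro x
    rw [hdv, deriv_fun_sub (hw2d x) ((hs2d x).const_mul c), deriv_const_mul c (hs2d x)]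
  have hz : ∀ x ∈ Set.Icc (0:ℝ) 1, v x = 0 := by
    apply cel_ivp_unique lam v hvc
    · intro x hx
      rw [hddv x, hwode x hx, hsode x, hv]
      ring
    · simp [hv, hw0, hs0]
    · rw [hdv]; simp [hs0', hc]
  have h1 : (1:ℝ) ∈ Set.Icc (0:ℝ) 1 := Set.right_mem_Icc.mpr zero_le_one
  have hc0 : c = 0 := by
    have := hz 1 h1
    simp only [hv, hw1] at this
    rcases mul_eq_zero.mp (by linarith : c * s 1 = 0) with h | h
    · exact h
    · exact absurd h hs1
  intro x hx
  have := hz x hx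
  simp only [hv, hc0] at this
  linarith

/-- Under the non-resonance condition, the only solution of `w'' = -λ w` on
`[0,1]` with `w 0 = w 1 = 0` is zero. -/
lemma cel_wzero (lam : ℝ) (hres : ∀ m : ℤ, lam ≠ (m : ℝ) ^ 2 * Real.pi ^ 2)
    (w : ℝ → ℝ) (hw : ContDiff ℝ 2 w)
    (hwode : ∀ x ∈ Set.Icc (0:ℝ) 1, deriv (deriv w) x = -lam * w x)
    (hw0 : w 0 = 0) (hw1 : w 1 = 0) :
    ∀ x ∈ Set.Icc (0:ℝ) 1, w x = 0 := by
  rcases lt_trichotomy lam 0 with hl | hl | hl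
  · -- hyperbolic case
    set ω : ℝ := Real.sqrt (-lam) with hωdef
    have hω : 0 < ω := Real.sqrt_pos.mpr (by linarith)
    have hω2 : ω ^ 2 = -lam := Real.sq_sqrt (by linarith)
    set s : ℝ → ℝ := fun x => Real.sinh (ω * x) / ω with hsdef
    have hlin : ∀ x : ℝ, HasDerivAt (fun y : ℝ => ω * y) ω x := fun x => by
      simpa using (hasDerivAt_id x).const_mul ω
    have hds : ∀ x, HasDerivAt s (Real.cosh (ω * x)) x := by
      intro x
      have := ((Real.hasDerivAt_sinh (ω * x)).comp x (hlin x)).div_const ω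
      simpa [mul_div_assoc, div_self hω.ne'] using this
    have hds1 : deriv s = fun x => Real.cosh (ω * x) := funext fun x => (hds x).deriv
    have hdds : ∀ x, HasDerivAt (fun x => Real.cosh (ω * x)) (Real.sinh (ω * x) * ω) x := by
      intro x
      exact (Real.hasDerivAt_cosh (ω * x)).comp x (hlin x)
    have hsc : ContDiff ℝ 2 s :=
      (Real.contDiff_sinh.comp (contDiff_const.mul contDiff_id)).div_const ω
    apply cel_bvp_zero lam w s hw hsc hwode
    · intro x
      rw [hds1, (hdds x).deriv, hsdef]
      have hωne := hω.ne'
      field_simp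
      linear_combination Real.sinh (ω * x) * hω2
    · exact hw0
    · exact hw1
    · simp [hsdef]
    · rw [hds1]; simp
    · simp only [hsdef, mul_one]
      exact div_ne_zero (ne_of_gt (Real.sinh_pos_iff.mpr hω)) hω.ne'
  · exact absurd hl (by simpa using hres 0)
  · -- trigonometric case
    set ω : ℝ := Real.sqrt lam with hωdef
    have hω : 0 < ω := Real.sqrt_pos.mpr hl
    have hω2 : ω ^ 2 = lam := Real.sq_sqrt hl.le
    set s : ℝ → ℝ := fun x => Real.sin (ω * x) / ω with hsdef
    have hlin : ∀ x : ℝ, HasDerivAt (fun y : ℝ => ω * y) ω x := fun x => by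
      simpa using (hasDerivAt_id x).const_mul ω
    have hds : ∀ x, HasDerivAt s (Real.cos (ω * x)) x := by
      intro x
      have := ((Real.hasDerivAt_sin (ω * x)).comp x (hlin x)).div_const ω
      simpa [mul_div_assoc, div_self hω.ne'] using this
    have hds1 : deriv s = fun x => Real.cos (ω * x) := funext fun x => (hds x).deriv
    have hdds : ∀ x, HasDerivAt (fun x => Real.cos (ω * x)) (-Real.sin (ω * x) * ω) x := by
      intro x
      exact (Real.hasDerivAt_cos (ω * x)).comp x (hlin x)
    have hsc : ContDiff ℝ 2 s :=
      (Real.contDiff_sin.comp (contDiff_const.mul contDiff_id)).div_const ω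
    apply cel_bvp_zero lam w s hw hsc hwode
    · intro x
      rw [hds1, (hdds x).deriv, hsdef]
      have hωne := hω.ne'
      field_simp
      linear_combination (-Real.sin (ω * x)) * hω2
    · exact hw0
    · exact hw1
    · simp [hsdef]
    · rw [hds1]; simp
    · simp only [hsdef, mul_one]
      refine div_ne_zero (fun h => ?_) hω.ne'
      obtain ⟨m, hm⟩ := Real.sin_eq_zero_iff.mp h
      exact hres m (by rw [← hω2, ← hm]; ring)

/-- Solutions of the coupled Euler–Lagrange system
`y₁'' + 2a y₂' + b y₁ = 0`, `y₂'' + 2a y₁' + b y₂ = 0` with common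
boundary values coincide (under the non-resonance condition), and the
common function solves the original damped oscillator problem. -/
theorem coupled_euler_lagrange_reduces
    (a b α β : ℝ) (y₁ y₂ : ℝ → ℝ)
    (h1 : ContDiff ℝ 2 y₁) (h2 : ContDiff ℝ 2 y₂)
    (hode1 : ∀ x ∈ Set.Ioo (0:ℝ) 1,
      deriv (deriv y₁) x + 2 * a * deriv y₂ x + b * y₁ x = 0)
    (hode2 : ∀ x ∈ Set.Ioo (0:ℝ) 1,
      deriv (deriv y₂) x + 2 * a * deriv y₁ x + b * y₂ x = 0)
    (hb10 : y₁ 0 = α) (hb20 : y₂ 0 = α)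
    (hb11 : y₁ 1 = β) (hb21 : y₂ 1 = β)
    (hres : ∀ m : ℤ, b - a ^ 2 ≠ (m : ℝ) ^ 2 * Real.pi ^ 2) :
    (∀ x ∈ Set.Icc (0:ℝ) 1, y₁ x = y₂ x) ∧
    (∀ x ∈ Set.Ioo (0:ℝ) 1,
      deriv (deriv y₁) x + 2 * a * deriv y₁ x + b * y₁ x = 0) ∧
    y₁ 0 = α ∧ y₁ 1 = β := by
  obtain ⟨h11d, h12d⟩ := cel_deriv_facts h1
  obtain ⟨h21d, h22d⟩ := cel_deriv_facts h2
  set u : ℝ → ℝ := fun x => y₁ x - y₂ x with hudef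
  have huc : ContDiff ℝ 2 u := h1.sub h2
  obtain ⟨hu1d, hu2d⟩ := cel_deriv_facts huc
  have hdu : deriv u = fun x => deriv y₁ x - deriv y₂ x := by
    funext x; rw [hudef]; exact deriv_sub (h11d x) (h21d x)
  have hddu : ∀ x, deriv (deriv u) x = deriv (deriv y₁) x - deriv (deriv y₂) x := by
    intro x; rw [hdu]; exact deriv_sub (h12d x) (h22d x)
  -- the ODE for u on the open interval
  have huode : ∀ x ∈ Set.Ioo (0:ℝ) 1,
      deriv (deriv u) x = 2 * a * deriv u x - b * u x := by
    intro x hx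
    have e1 := hode1 x hx
    have e2 := hode2 x hx
    rw [hddu x, hdu]
    simp only [hudef]
    linarith
  -- extend to the closed interval by continuity
  have huodeI : ∀ x ∈ Set.Icc (0:ℝ) 1,
      deriv (deriv u) x = 2 * a * deriv u x - b * u x := by
    have hcont1 : Continuous (deriv (deriv u)) := by
      have hu2 : ContDiff ℝ ((1:ℕ) + 1) u := by exact_mod_cast huc
      obtain ⟨-, -, hcd1⟩ := contDiff_succ_iff_deriv.mp hu2
      exact hcd1.continuous_deriv le_rfl
    have hcont2 : Continuous (fun x => 2 * a * deriv u x - b * u x) :=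
      (continuous_const.mul hu2d.continuous).sub (continuous_const.mul hu1d.continuous)
    have heqon : Set.EqOn (deriv (deriv u)) (fun x => 2 * a * deriv u x - b * u x)
        (Set.Ioo (0:ℝ) 1) := fun x hx => huode x hx
    have := heqon.closure hcont1 hcont2
    rw [closure_Ioo (zero_ne_one)] at this
    exact fun x hx => this hx
  -- substitution w = exp(-a x) * u
  set w : ℝ → ℝ := fun x => Real.exp (-a * x) * u x with hwdef
  have hlin : ∀ x : ℝ, HasDerivAt (fun y : ℝ => -a * y) (-a) x := fun x => by
    simpa using (hasDerivAt_id x).const_mul (-a)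
  have hexp : ∀ x : ℝ, HasDerivAt (fun x => Real.exp (-a * x))
      (Real.exp (-a * x) * (-a)) x := fun x =>
    (Real.hasDerivAt_exp (-a * x)).comp x (hlin x)
  have hdw : ∀ x, HasDerivAt w (Real.exp (-a * x) * (deriv u x - a * u x)) x := by
    intro x
    have := (hexp x).mul ((hu1d x).hasDerivAt)
    exact this.congr_deriv (by ring)
  have hdw1 : deriv w = fun x => Real.exp (-a * x) * (deriv u x - a * u x) :=
    funext fun x => (hdw x).deriv
  have hddw : ∀ x, HasDerivAt (fun x => Real.exp (-a * x) * (deriv u x - a * u x))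
      (Real.exp (-a * x) * ((deriv (deriv u) x - a * deriv u x)
        - a * (deriv u x - a * u x))) x := by
    intro x
    have hin : HasDerivAt (fun x => deriv u x - a * u x)
        (deriv (deriv u) x - a * deriv u x) x :=
      ((hu2d x).hasDerivAt).sub (((hu1d x).hasDerivAt).const_mul a)
    have := (hexp x).mul hin
    exact this.congr_deriv (by ring)
  have hwc : ContDiff ℝ 2 w :=
    (Real.contDiff_exp.comp (contDiff_const.mul contDiff_id)).mul huc
  have hwode : ∀ x ∈ Set.Icc (0:ℝ) 1,
      deriv (deriv w) x = -(b - a ^ 2) * w x := by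
    intro x hx
    rw [hdw1, (hddw x).deriv, huodeI x hx, hwdef]
    ring
  have hw0 : w 0 = 0 := by simp [hwdef, hudef, hb10, hb20]
  have hw1 : w 1 = 0 := by simp [hwdef, hudef, hb11, hb21]
  have hwz := cel_wzero (b - a ^ 2) hres w hwc hwode hw0 hw1
  have huz : ∀ x ∈ Set.Icc (0:ℝ) 1, u x = 0 := by
    intro x hx
    have := hwz x hx
    simp only [hwdef] at this
    exact (mul_eq_zero.mp this).resolve_left (ne_of_gt (Real.exp_pos _))
  have heq : ∀ x ∈ Set.Icc (0:ℝ) 1, y₁ x = y₂ x := by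
    intro x hx
    have := huz x hx
    simp only [hudef] at this
    linarith
  refine ⟨heq, ?_, hb10, hb11⟩
  intro x hx
  have hev : y₁ =ᶠ[nhds x] y₂ :=
    Filter.eventuallyEq_of_mem (Ioo_mem_nhds hx.1 hx.2)
      (fun y hy => heq y (Set.mem_Icc_of_Ioo hy))
  have hder : deriv y₁ x = deriv y₂ x := hev.deriv_eq
  rw [hder]
  exact hode1 x hx
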